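/- Let ℓ(z) = ln(1+e^z) be the logistic loss and define ψ(ξ) := ℓ^{-1}(∑_{i=1}^n ℓ(ξ_i)) for ξ ∈ ℝⁿ. If ψ(ξ) ≤ 0 (equivalently ∑_i ℓ(ξ_i) ≤ ℓ(0) = ln 2), then the gradient q = ∇ψ(ξ), with coordinates q_i = ℓ'(ξ_i)/ℓ'(ψ(ξ)), satisfies 1 ≤ ‖q‖₁ ≤ 2. -/

import Mathlib

open Finset in
lemma weierstrass_aux {ι : Type*} [DecidableEq ι] (s : Finset ι) (f : ι → ℝ)
    (h0 : ∀ i ∈ s, 0 ≤ f i) (h1 : ∀ i ∈ s, f i ≤ 1) :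
    1 - ∑ i ∈ s, (1 - f i) ≤ ∏ i ∈ s, f i := by
  induction s using Finset.induction_on with
  | empty => simp
  | @insert a s' hx ih =>
    rw [Finset.sum_insert hx, Finset.prod_insert hx]
    have hih := ih (fun i hi => h0 i (Finset.mem_insert_of_mem hi))
      (fun i hi => h1 i (Finset.mem_insert_of_mem hi))
    have hfa0 : 0 ≤ f a := h0 a (Finset.mem_insert_self a s')
    have hfa1 : f a ≤ 1 := h1 a (Finset.mem_insert_self a s')
    have hprod1 : ∏ i ∈ s', f i ≤ 1 :=
      Finset.prod_le_one (fun i hi => h0 i (Finset.mem_insert_of_mem hi))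
        (fun i hi => h1 i (Finset.mem_insert_of_mem hi))
    nlinarith [Finset.prod_nonneg (fun i hi => h0 i (Finset.mem_insert_of_mem hi))]

/-- For the logistic loss `ℓ(z) = ln(1+e^z)` and the smoothed margin
`ψ(ξ) = ℓ⁻¹(∑ᵢ ℓ(ξᵢ))`, if `ψ(ξ) ≤ 0` (equivalently `∑ᵢ ℓ(ξᵢ) ≤ ℓ(0) = ln 2`),
then the gradient `q = ∇ψ(ξ)`, with `qᵢ = (1 − e^{−ℓ(ξᵢ)}) / (1 − e^{−∑ⱼ ℓ(ξⱼ)})`,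
satisfies `1 ≤ ‖q‖₁ ≤ 2`. -/
theorem stmt_4 {n : ℕ} (hn : 0 < n) (ξ : Fin n → ℝ)
    (hsub : ∑ i, Real.log (1 + Real.exp (ξ i)) ≤ Real.log 2)
    (q : Fin n → ℝ)
    (hq : ∀ i, q i = (1 - Real.exp (-(Real.log (1 + Real.exp (ξ i))))) /
        (1 - Real.exp (-(∑ j, Real.log (1 + Real.exp (ξ j)))))) :
    1 ≤ ∑ i, |q i| ∧ ∑ i, |q i| ≤ 2 := by
  set L : Fin n → ℝ := fun i => Real.log (1 + Real.exp (ξ i)) with hLdef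
  have hL : ∀ i, 0 < L i := fun i =>
    Real.log_pos (by linarith [Real.exp_pos (ξ i)])
  set S : ℝ := ∑ j, L j with hSdef
  have hS : 0 < S := Finset.sum_pos (fun i _ => hL i)
    (Finset.univ_nonempty_iff.mpr ⟨⟨0, hn⟩⟩)
  have hDS : Real.exp (-S) < 1 := Real.exp_lt_one_iff.mpr (by linarith)
  have hD : 0 < 1 - Real.exp (-S) := by linarith
  have hqi : ∀ i, q i = (1 - Real.exp (-(L i))) / (1 - Real.exp (-S)) := hq
  have hqnn : ∀ i, 0 ≤ q i := fun i => by
    rw [hqi i]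
    have : Real.exp (-(L i)) < 1 := Real.exp_lt_one_iff.mpr (by linarith [hL i])
    exact div_nonneg (by linarith) (le_of_lt hD)
  have habs : ∀ i, |q i| = q i := fun i => abs_of_nonneg (hqnn i)
  have hsum : ∑ i, |q i| = (∑ i, (1 - Real.exp (-(L i)))) / (1 - Real.exp (-S)) := by
    simp_rw [habs, hqi]
    rw [Finset.sum_div]
  set N : ℝ := ∑ i, (1 - Real.exp (-(L i))) with hNdef
  -- lower bound: 1 - exp(-S) ≤ N
  have hlow : 1 - Real.exp (-S) ≤ N := by
    have hprod : Real.exp (-S) = ∏ i, Real.exp (-(L i)) := by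
      rw [← Real.exp_sum]
      congr 1
      rw [hSdef, ← Finset.sum_neg_distrib]
    have := weierstrass_aux Finset.univ (fun i => Real.exp (-(L i)))
      (fun i _ => (Real.exp_pos _).le)
      (fun i _ => (Real.exp_lt_one_iff.mpr (by linarith [hL i])).le)
    simp only [hNdef]
    calc 1 - Real.exp (-S) = 1 - ∏ i, Real.exp (-(L i)) := by rw [hprod]
      _ ≤ ∑ i, (1 - Real.exp (-(L i))) := by linarith [this]
  -- upper bound pieces
  have hNleS : N ≤ S := by
    apply Finset.sum_le_sum
    intro i _
    have := Real.add_one_le_exp (-(L i))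
    linarith
  have hlog2 : (0:ℝ) < Real.log 2 := Real.log_pos (by norm_num)
  have hlog2le : Real.log 2 ≤ 1 := by
    have := Real.log_le_sub_one_of_pos (by norm_num : (0:ℝ) < 2)
    linarith
  -- convexity: exp(-S) ≤ 1 - S/(2 log 2)
  have hconv : Real.exp (-S) ≤ 1 - S / (2 * Real.log 2) := by
    have hSle : S ≤ Real.log 2 := by rw [hSdef]; exact hsub
    have ha : 0 ≤ S / Real.log 2 := div_nonneg hS.le hlog2.le
    have hb : 0 ≤ 1 - S / Real.log 2 := by
      rw [sub_nonneg]
      exact (div_le_one hlog2).mpr hSle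
    have hcvx := convexOn_exp.2 (Set.mem_univ (-Real.log 2)) (Set.mem_univ 0)
      ha hb (by ring)
    have hpt : (S / Real.log 2) • (-Real.log 2) + (1 - S / Real.log 2) • (0:ℝ) = -S := by
      rw [smul_eq_mul, smul_eq_mul]
      field_simp
      ring
    rw [hpt] at hcvx
    have hexplog : Real.exp (-Real.log 2) = 2⁻¹ := by
      rw [Real.exp_neg, Real.exp_log (by norm_num : (0:ℝ) < 2)]
    rw [hexplog, Real.exp_zero, smul_eq_mul, smul_eq_mul] at hcvx
    have heq : S / Real.log 2 * 2⁻¹ + (1 - S / Real.log 2) * 1 = 1 - S / (2 * Real.log 2) := by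
      ring
    rw [heq] at hcvx
    exact hcvx
  have hSle2D : S ≤ 2 * (1 - Real.exp (-S)) := by
    have h1 : S ≤ S / Real.log 2 := (le_div_iff₀ hlog2).mpr (by nlinarith)
    have h2 : S / (2 * Real.log 2) = (S / Real.log 2) / 2 := by ring
    linarith [hconv]
  constructor
  · rw [hsum]
    exact (one_le_div hD).mpr hlow
  · rw [hsum]
    rw [div_le_iff₀ hD]
    linarith
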